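/- arXiv:1712.01344 — 3 statements merged into one kernel-verified Lean document; each statement's English description precedes it below -/
import Mathlib

section
/- Let r, τ, ω > 0 with ω > τ, let p, q > 0, let 0 < ν < 1, and let z ∈ (0,1). Then S_{2,ν,τ,ω}^{(2,1)}(r; {k}; p,q; z) = (1/(2irΓ(ν))) [ D_z^{ν−1}( z^{ν−1} Φ_{τ,ω}(z, 2, −ir; p,q) ) − D_z^{ν−1}( z^{ν−1} Φ_{τ,ω}(z, 2, ir; p,q) ) ], where for a function g on (0,1) the Riemann–Liouville fractional derivative of (negative) order ν − 1 is D_z^{ν−1} g(z) = (1/Γ(1−ν)) ∫₀^z (z−u)^{−ν} g(u) du. -/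
open Real MeasureTheory Set Filter

/-- Pochhammer symbol `(a)_n = Γ(a+n)/Γ(a)`. -/
noncomputable def poch (a : ℝ) (n : ℕ) : ℝ := Real.Gamma (a + n) / Real.Gamma a

/-- Euler beta function. -/
noncomputable def betaE (x y : ℝ) : ℝ := Real.Gamma x * Real.Gamma y / Real.Gamma (x + y)

/-- Extended beta function `B_{p,q}(x,y)`. -/
noncomputable def betaPQ (p q x y : ℝ) : ℝ :=
  ∫ t in Ioo (0:ℝ) 1, t ^ (x - 1) * (1 - t) ^ (y - 1) * Real.exp (-p / t - q / (1 - t))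

/-- Extended Hurwitz–Lerch zeta function `Φ_{τ,ω}(z,s,a;p,q)` (the case `λ = 1`),
with complex parameter `a` and principal powers. -/
noncomputable def hurwitzPhi (τ ω p q : ℝ) (z : ℝ) (s : ℂ) (a : ℂ) : ℂ :=
  ∑' n : ℕ, (betaPQ p q (τ + (n : ℝ)) (ω - τ) : ℂ) * (z : ℂ) ^ n /
    ((betaE τ (ω - τ) : ℂ) * (a + (n : ℂ)) ^ s)

/-- Riemann–Liouville fractional derivative of order `ν - 1` (with `0 < ν < 1`,
so of negative order) of a function `g` on `(0,1)`, evaluated at `z`. -/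
noncomputable def rlDeriv (ν : ℝ) (g : ℝ → ℂ) (z : ℝ) : ℂ :=
  (1 / (Real.Gamma (1 - ν) : ℂ)) *
    ∫ u in Ioo (0:ℝ) z, (((z - u) ^ (-ν) : ℝ) : ℂ) * g u

variable {ν z r τ ω p q : ℝ}

lemma aux_rpow_exp_bound (α pp : ℝ) (hp : 0 < pp) :
    ∃ M : ℝ, 0 ≤ M ∧ ∀ t ∈ Ioo (0:ℝ) 1, t ^ α * Real.exp (-pp / t) ≤ M := by
  obtain ⟨k, hk⟩ := exists_nat_ge (-α)
  refine ⟨(k.factorial : ℝ) / pp ^ k, by positivity, fun t ht => ?_⟩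
  obtain ⟨ht0, ht1⟩ := ht
  have hpt : 0 < pp / t := div_pos hp ht0
  have h1 : (pp / t) ^ k / (k.factorial : ℝ) ≤ Real.exp (pp / t) :=
    Real.pow_div_factorial_le_exp (hx := hpt.le) (n := k)
  have h2 : Real.exp (-pp / t) ≤ ((pp / t) ^ k / (k.factorial : ℝ))⁻¹ := by
    rw [neg_div, Real.exp_neg]
    exact inv_anti₀ (by positivity) h1
  calc t ^ α * Real.exp (-pp / t)
      ≤ t ^ α * ((pp / t) ^ k / (k.factorial : ℝ))⁻¹ := by
        apply mul_le_mul_of_nonneg_left h2 (by positivity)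
    _ = (k.factorial : ℝ) / pp ^ k * (t ^ α * t ^ (k : ℝ)) := by
        rw [Real.rpow_natCast t k, div_pow]
        field_simp
    _ = (k.factorial : ℝ) / pp ^ k * t ^ (α + (k : ℝ)) := by
        rw [← Real.rpow_add ht0]
    _ ≤ (k.factorial : ℝ) / pp ^ k * 1 := by
        apply mul_le_mul_of_nonneg_left _ (by positivity)
        exact Real.rpow_le_one ht0.le ht1.le (by linarith)
    _ = _ := mul_one _

lemma betaPQ_nonneg (p q x y : ℝ) : 0 ≤ betaPQ p q x y := by
  apply setIntegral_nonneg measurableSet_Ioo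
  intro t ht
  have h1 : (0:ℝ) ≤ t := ht.1.le
  have h2 : (0:ℝ) ≤ 1 - t := by linarith [ht.2]
  positivity

lemma betaPQ_uniform_bound (τ ω p q : ℝ) (hτ : 0 < τ) (hp : 0 < p) (hq : 0 < q) :
    ∃ M : ℝ, 0 ≤ M ∧ ∀ n : ℕ, betaPQ p q (τ + n) (ω - τ) ≤ M := by
  obtain ⟨M1, hM1, hb1⟩ := aux_rpow_exp_bound (τ - 1) p hp
  obtain ⟨M2, hM2, hb2⟩ := aux_rpow_exp_bound (ω - τ - 1) q hq
  refine ⟨M1 * M2, by positivity, fun n => ?_⟩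
  have key : ∀ t ∈ Ioo (0:ℝ) 1,
      t ^ (τ + n - 1) * (1 - t) ^ (ω - τ - 1) * Real.exp (-p / t - q / (1 - t))
        ≤ M1 * M2 := by
    intro t ht
    obtain ⟨ht0, ht1⟩ := ht
    have h1t : (1 - t) ∈ Ioo (0:ℝ) 1 := ⟨by linarith, by linarith⟩
    have hexp : Real.exp (-p / t - q / (1 - t))
        = Real.exp (-p / t) * Real.exp (-q / (1 - t)) := by
      rw [← Real.exp_add]; ring_nf
    have e1 : t ^ (τ + n - 1) * Real.exp (-p / t) ≤ M1 := by
      refine le_trans ?_ (hb1 t ⟨ht0, ht1⟩)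
      apply mul_le_mul_of_nonneg_right _ (Real.exp_pos _).le
      exact Real.rpow_le_rpow_of_exponent_ge ht0 ht1.le (by
        have : (0:ℝ) ≤ (n:ℝ) := Nat.cast_nonneg n
        linarith)
    have e2 : (1 - t) ^ (ω - τ - 1) * Real.exp (-q / (1 - t)) ≤ M2 := hb2 _ h1t
    calc t ^ (τ + n - 1) * (1 - t) ^ (ω - τ - 1) * Real.exp (-p / t - q / (1 - t))
        = (t ^ (τ + n - 1) * Real.exp (-p / t)) *
            ((1 - t) ^ (ω - τ - 1) * Real.exp (-q / (1 - t))) := by rw [hexp]; ring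
      _ ≤ M1 * M2 := by
          have h2 : (0:ℝ) ≤ 1 - t := by linarith
          exact mul_le_mul e1 e2 (by positivity) hM1
  unfold betaPQ
  calc (∫ t in Ioo (0:ℝ) 1,
        t ^ (τ + (n:ℝ) - 1) * (1 - t) ^ (ω - τ - 1) * Real.exp (-p / t - q / (1 - t)))
      ≤ ∫ _t in Ioo (0:ℝ) 1, M1 * M2 := by
        apply integral_mono_of_nonneg
        · filter_upwards [ae_restrict_mem measurableSet_Ioo] with t ht
          have h1 : (0:ℝ) ≤ t := ht.1.le
          have h2 : (0:ℝ) ≤ 1 - t := by linarith [ht.2]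
          positivity
        · exact integrableOn_const (by simp)
        · filter_upwards [ae_restrict_mem measurableSet_Ioo] with t ht
          exact key t ht
    _ = M1 * M2 := by simp

lemma J_eqOn (hν0 : 0 < ν) (hν1 : ν < 1) (n : ℕ) :
    EqOn (fun x : ℝ => (x:ℂ) ^ ((ν + n : ℂ) - 1) * ((1:ℂ) - x) ^ ((1 - ν : ℂ) - 1))
      (fun t : ℝ => ((t ^ (ν - 1 + n) * (1 - t) ^ (-ν) : ℝ) : ℂ)) (Ioo (0:ℝ) 1) := by
  intro x hx
  obtain ⟨hx0, hx1⟩ := hx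
  have h1 : ((ν:ℂ) + n) - 1 = ((ν - 1 + n : ℝ) : ℂ) := by push_cast; ring
  have h2 : ((1:ℂ) - ν) - 1 = ((-ν : ℝ) : ℂ) := by push_cast; ring
  have h3 : ((1:ℂ) - x) = ((1 - x : ℝ) : ℂ) := by push_cast; ring
  simp only [h1, h2, h3]
  rw [← Complex.ofReal_cpow hx0.le, ← Complex.ofReal_cpow (by linarith : (0:ℝ) ≤ 1 - x),
    ← Complex.ofReal_mul]

lemma J_integrable (hν0 : 0 < ν) (hν1 : ν < 1) (n : ℕ) :
    IntegrableOn (fun t : ℝ => t ^ (ν - 1 + n) * (1 - t) ^ (-ν)) (Ioo (0:ℝ) 1) := by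
  have hc : IntervalIntegrable
      (fun x : ℝ => (x:ℂ) ^ ((ν + n : ℂ) - 1) * ((1:ℂ) - x) ^ ((1 - ν : ℂ) - 1))
      volume 0 1 := by
    apply Complex.betaIntegral_convergent
    · simp only [Complex.add_re, Complex.ofReal_re, Complex.natCast_re]
      positivity
    · simp only [Complex.sub_re, Complex.one_re, Complex.ofReal_re]
      linarith
  have hIoc := (intervalIntegrable_iff_integrableOn_Ioc_of_le zero_le_one).mp hc
  have hIoo : IntegrableOn
      (fun x : ℝ => (x:ℂ) ^ ((ν + n : ℂ) - 1) * ((1:ℂ) - x) ^ ((1 - ν : ℂ) - 1))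
      (Ioo (0:ℝ) 1) := hIoc.mono_set Ioo_subset_Ioc_self
  have h2 := (hIoo.congr_fun (J_eqOn hν0 hν1 n) measurableSet_Ioo).re
  refine MeasureTheory.IntegrableOn.congr_fun h2 (fun x _ => ?_) measurableSet_Ioo
  simp

lemma J_value (hν0 : 0 < ν) (hν1 : ν < 1) (n : ℕ) :
    ∫ t in Ioo (0:ℝ) 1, t ^ (ν - 1 + n) * (1 - t) ^ (-ν)
      = Real.Gamma (ν + n) * Real.Gamma (1 - ν) / n.factorial := by
  have hu : 0 < ((ν:ℂ) + n).re := by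
    simp only [Complex.add_re, Complex.ofReal_re, Complex.natCast_re]; positivity
  have hv : 0 < ((1:ℂ) - ν).re := by
    simp only [Complex.sub_re, Complex.one_re, Complex.ofReal_re]; linarith
  have hbeta := Complex.Gamma_mul_Gamma_eq_betaIntegral hu hv
  have hsum : ((ν:ℂ) + n) + ((1:ℂ) - ν) = ((n:ℕ) + 1 : ℂ) := by push_cast; ring
  have hGsum : Complex.Gamma (((ν:ℂ) + n) + ((1:ℂ) - ν)) = (n.factorial : ℂ) := by
    rw [hsum]; exact_mod_cast Complex.Gamma_nat_eq_factorial n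
  have hfacne : (n.factorial : ℂ) ≠ 0 := by exact_mod_cast n.factorial_ne_zero
  have hBval : Complex.betaIntegral ((ν:ℂ) + n) ((1:ℂ) - ν)
      = Complex.Gamma ((ν:ℂ) + n) * Complex.Gamma ((1:ℂ) - ν) / (n.factorial : ℂ) := by
    rw [hbeta, hGsum]
    field_simp
  have hBI : Complex.betaIntegral ((ν:ℂ) + n) ((1:ℂ) - ν)
      = ∫ t in Ioo (0:ℝ) 1, ((t ^ (ν - 1 + n) * (1 - t) ^ (-ν) : ℝ) : ℂ) := by
    rw [Complex.betaIntegral, intervalIntegral.integral_of_le zero_le_one,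
      integral_Ioc_eq_integral_Ioo]
    exact setIntegral_congr_fun measurableSet_Ioo (J_eqOn hν0 hν1 n)
  have hGu : Complex.Gamma ((ν:ℂ) + n) = ((Real.Gamma (ν + n) : ℝ) : ℂ) := by
    rw [show ((ν:ℂ) + n) = ((ν + n : ℝ) : ℂ) by push_cast; ring, Complex.Gamma_ofReal]
  have hGv : Complex.Gamma ((1:ℂ) - ν) = ((Real.Gamma (1 - ν) : ℝ) : ℂ) := by
    rw [show ((1:ℂ) - ν) = ((1 - ν : ℝ) : ℂ) by push_cast; ring, Complex.Gamma_ofReal]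
  apply Complex.ofReal_injective
  calc ((∫ t in Ioo (0:ℝ) 1, t ^ (ν - 1 + n) * (1 - t) ^ (-ν) : ℝ) : ℂ)
      = ∫ t in Ioo (0:ℝ) 1, ((t ^ (ν - 1 + n) * (1 - t) ^ (-ν) : ℝ) : ℂ) :=
        integral_ofReal.symm
    _ = Complex.betaIntegral ((ν:ℂ) + n) ((1:ℂ) - ν) := hBI.symm
    _ = Complex.Gamma ((ν:ℂ) + n) * Complex.Gamma ((1:ℂ) - ν) / (n.factorial : ℂ) := hBval
    _ = ((Real.Gamma (ν + n) * Real.Gamma (1 - ν) / n.factorial : ℝ) : ℂ) := by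
        rw [hGu, hGv]; push_cast; ring

lemma K_eqOn (hν0 : 0 < ν) (hν1 : ν < 1) (hz : 0 < z) (n : ℕ) :
    EqOn (fun u : ℝ => (z - u) ^ (-ν) * u ^ (ν - 1 + n))
      (fun u : ℝ => z ^ ((n:ℝ) - 1) * ((u / z) ^ (ν - 1 + n) * (1 - u / z) ^ (-ν)))
      (Ioo (0:ℝ) z) := by
  intro u hu
  obtain ⟨hu0, huz⟩ := hu
  have h1 : 1 - u / z = (z - u) / z := by field_simp
  have h2 : (0:ℝ) ≤ z - u := by linarith
  simp only [h1]
  rw [Real.div_rpow hu0.le hz.le, Real.div_rpow h2 hz.le]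
  have hzc : z ^ ((n:ℝ) - 1) = z ^ (ν - 1 + (n:ℝ)) * z ^ (-ν) := by
    rw [← Real.rpow_add hz]; ring_nf
  rw [hzc]
  have n1 : z ^ (ν - 1 + (n:ℝ)) ≠ 0 := (Real.rpow_pos_of_pos hz _).ne'
  have n2 : z ^ (-ν) ≠ 0 := (Real.rpow_pos_of_pos hz _).ne'
  field_simp

lemma K_integrable (hν0 : 0 < ν) (hν1 : ν < 1) (hz : 0 < z) (n : ℕ) :
    IntegrableOn (fun u : ℝ => (z - u) ^ (-ν) * u ^ (ν - 1 + n)) (Ioo (0:ℝ) z) := by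
  have hJ := J_integrable hν0 hν1 n
  have hJ' : IntervalIntegrable (fun t : ℝ => t ^ (ν - 1 + n) * (1 - t) ^ (-ν)) volume 0 1 :=
    (intervalIntegrable_iff_integrableOn_Ioc_of_le zero_le_one).mpr
      ((integrableOn_Ioc_iff_integrableOn_Ioo).mpr hJ)
  have hcomp := (hJ'.comp_mul_right (c := z⁻¹)).const_mul (z ^ ((n:ℝ) - 1))
  rw [show (0:ℝ) / z⁻¹ = 0 by simp, show (1:ℝ) / z⁻¹ = z by simp] at hcomp
  have hIoo : IntegrableOn
      (fun u : ℝ => z ^ ((n:ℝ) - 1) * ((u * z⁻¹) ^ (ν - 1 + n) * (1 - u * z⁻¹) ^ (-ν)))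
      (Ioo (0:ℝ) z) :=
    (integrableOn_Ioc_iff_integrableOn_Ioo).mp
      ((intervalIntegrable_iff_integrableOn_Ioc_of_le hz.le).mp hcomp)
  refine hIoo.congr_fun (fun u hu => ?_) measurableSet_Ioo
  have := (K_eqOn hν0 hν1 hz n hu).symm
  simpa [div_eq_mul_inv] using this

lemma K_value (hν0 : 0 < ν) (hν1 : ν < 1) (hz : 0 < z) (n : ℕ) :
    ∫ u in Ioo (0:ℝ) z, (z - u) ^ (-ν) * u ^ (ν - 1 + n)
      = z ^ n * (Real.Gamma (ν + n) * Real.Gamma (1 - ν) / n.factorial) := by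
  have hne : z ≠ 0 := hz.ne'
  have hsub := intervalIntegral.integral_comp_mul_right
    (a := 0) (b := 1) (fun u : ℝ => (z - u) ^ (-ν) * u ^ (ν - 1 + n)) hne
  rw [zero_mul, one_mul] at hsub
  have h1 : (∫ u in Ioo (0:ℝ) z, (z - u) ^ (-ν) * u ^ (ν - 1 + n))
      = ∫ u in (0:ℝ)..z, (z - u) ^ (-ν) * u ^ (ν - 1 + n) := by
    rw [intervalIntegral.integral_of_le hz.le, integral_Ioc_eq_integral_Ioo]
  have h2 : (∫ t in (0:ℝ)..1, (z - t * z) ^ (-ν) * (t * z) ^ (ν - 1 + n))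
      = ∫ t in Ioo (0:ℝ) 1, z ^ ((n:ℝ) - 1) * (t ^ (ν - 1 + n) * (1 - t) ^ (-ν)) := by
    rw [intervalIntegral.integral_of_le zero_le_one, integral_Ioc_eq_integral_Ioo]
    apply setIntegral_congr_fun measurableSet_Ioo
    intro t ht
    obtain ⟨ht0, ht1⟩ := ht
    dsimp only
    have htz : t * z ∈ Ioo (0:ℝ) z := ⟨by positivity, by nlinarith⟩
    have := K_eqOn hν0 hν1 hz n htz
    simp only at this
    rw [this]
    have hd : t * z / z = t := by field_simp
    rw [hd]
  have h3 : (∫ u in (0:ℝ)..z, (z - u) ^ (-ν) * u ^ (ν - 1 + (n:ℝ)))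
      = z * ∫ t in (0:ℝ)..1, (z - t * z) ^ (-ν) * (t * z) ^ (ν - 1 + (n:ℝ)) := by
    rw [hsub, smul_eq_mul]
    field_simp
  rw [h1, h3, h2]
  rw [integral_const_mul, J_value hν0 hν1 n]
  rw [show z * (z ^ ((n:ℝ) - 1) * (Real.Gamma (ν + ↑n) * Real.Gamma (1 - ν) / ↑n.factorial))
      = (z * z ^ ((n:ℝ) - 1)) * (Real.Gamma (ν + ↑n) * Real.Gamma (1 - ν) / ↑n.factorial) by ring]
  congr 1
  rw [show z * z ^ ((n:ℝ) - 1) = z ^ (1:ℝ) * z ^ ((n:ℝ) - 1) by rw [Real.rpow_one],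
    ← Real.rpow_add hz, ← Real.rpow_natCast z n]
  norm_num

lemma Gamma_fact_le (hν0 : 0 < ν) (hν1 : ν < 1) (n : ℕ) :
    Real.Gamma (ν + n) ≤ Real.Gamma ν * n.factorial := by
  induction n with
  | zero => simp
  | succ n ih =>
    have hpos : 0 < ν + n := by positivity
    have h1 : Real.Gamma (ν + (n + 1 : ℕ)) = (ν + n) * Real.Gamma (ν + n) := by
      rw [show (ν + ((n:ℕ) + 1 : ℕ) : ℝ) = (ν + n) + 1 by push_cast; ring]
      exact Real.Gamma_add_one hpos.ne'
    rw [h1]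
    calc (ν + n) * Real.Gamma (ν + n) ≤ (ν + n) * (Real.Gamma ν * n.factorial) := by
          exact mul_le_mul_of_nonneg_left ih hpos.le
      _ ≤ ((n:ℝ) + 1) * (Real.Gamma ν * n.factorial) := by
          apply mul_le_mul_of_nonneg_right (by linarith)
          have := Real.Gamma_pos_of_pos hν0
          positivity
      _ = Real.Gamma ν * (n + 1).factorial := by
          rw [Nat.factorial_succ]; push_cast; ring

lemma key_lemma (hr : 0 < r) (hτ : 0 < τ) (hτω : τ < ω)
    (hp : 0 < p) (hq : 0 < q) (hν0 : 0 < ν) (hν1 : ν < 1)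
    (hz : z ∈ Ioo (0:ℝ) 1) (a : ℂ) (hra : ∀ n : ℕ, r ≤ ‖a + (n:ℂ)‖) :
    rlDeriv ν (fun u => ((u ^ (ν - 1) : ℝ) : ℂ) * hurwitzPhi τ ω p q u 2 a) z
      = ∑' n : ℕ, ((betaPQ p q (τ + n) (ω - τ) * Real.Gamma (ν + n) * z ^ n /
          (n.factorial * betaE τ (ω - τ)) : ℝ) : ℂ) / ((a + n) ^ 2) := by
  obtain ⟨hz0, hz1⟩ := hz
  set B : ℝ := betaE τ (ω - τ) with hB
  have hBpos : 0 < B := by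
    rw [hB]; unfold betaE
    have h1 := Real.Gamma_pos_of_pos hτ
    have h2 := Real.Gamma_pos_of_pos (by linarith : (0:ℝ) < ω - τ)
    have h3 := Real.Gamma_pos_of_pos (by linarith : (0:ℝ) < τ + (ω - τ))
    positivity
  set c : ℕ → ℝ := fun n => betaPQ p q (τ + n) (ω - τ) with hc
  have hcnn : ∀ n, 0 ≤ c n := fun n => betaPQ_nonneg _ _ _ _
  obtain ⟨M, hM0, hMle⟩ := betaPQ_uniform_bound τ ω p q hτ hp hq
  have hane : ∀ n : ℕ, a + (n:ℂ) ≠ 0 := by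
    intro n h
    have := hra n
    rw [h, norm_zero] at this
    linarith
  set F : ℕ → ℝ → ℂ := fun n u =>
    ((c n : ℂ) / ((B : ℂ) * (a + n) ^ 2)) * (((z - u) ^ (-ν) * u ^ (ν - 1 + n) : ℝ) : ℂ)
    with hF
  -- Step 1 : integrand equality
  have step1 : ∀ u ∈ Ioo (0:ℝ) z,
      (((z - u) ^ (-ν) : ℝ) : ℂ) * (((u ^ (ν - 1) : ℝ) : ℂ) * hurwitzPhi τ ω p q u 2 a)
        = ∑' n : ℕ, F n u := by
    intro u hu
    obtain ⟨hu0, huz⟩ := hu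
    unfold hurwitzPhi
    rw [← tsum_mul_left, ← tsum_mul_left]
    apply tsum_congr
    intro n
    rw [hF]
    dsimp only
    have hcp : ((a + n) : ℂ) ^ (2:ℂ) = (a + n) ^ 2 := by
      rw [show (2:ℂ) = ((2:ℕ):ℂ) by norm_num, Complex.cpow_natCast]
    rw [hcp]
    have hsplit : ((z - u) ^ (-ν) * u ^ (ν - 1 + n) : ℝ)
        = (z - u) ^ (-ν) * (u ^ (ν - 1) * u ^ n) := by
      rw [← Real.rpow_natCast u n, ← Real.rpow_add hu0]
    rw [hsplit]
    push_cast
    have : ((u:ℂ)) ^ (n:ℕ) = (((u ^ n : ℝ)) : ℂ) := by push_cast; ring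
    field_simp
    ring
  -- Step 2 : integrability of each F n
  have hFint : ∀ n : ℕ, IntegrableOn (F n) (Ioo (0:ℝ) z) := by
    intro n
    exact ((K_integrable hν0 hν1 hz0 n).ofReal.const_mul _)
  -- norms of the integrals
  have hnormval : ∀ n : ℕ, (∫ u in Ioo (0:ℝ) z, ‖F n u‖)
      = ‖(c n : ℂ) / ((B : ℂ) * (a + n) ^ 2)‖ *
          (z ^ n * (Real.Gamma (ν + n) * Real.Gamma (1 - ν) / n.factorial)) := by
    intro n
    have : ∀ u ∈ Ioo (0:ℝ) z, ‖F n u‖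
        = ‖(c n : ℂ) / ((B : ℂ) * (a + n) ^ 2)‖ * ((z - u) ^ (-ν) * u ^ (ν - 1 + n)) := by
      intro u hu
      obtain ⟨hu0, huz⟩ := hu
      rw [hF]
      have h1 : (0:ℝ) ≤ z - u := by linarith
      have h2 : (0:ℝ) ≤ (z - u) ^ (-ν) * u ^ (ν - 1 + n) :=
        mul_nonneg (Real.rpow_nonneg h1 _) (Real.rpow_nonneg hu0.le _)
      rw [norm_mul, Complex.norm_real, Real.norm_of_nonneg h2]
    rw [setIntegral_congr_fun measurableSet_Ioo this, integral_const_mul,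
      K_value hν0 hν1 hz0 n]
  -- Step 3 : summability of integral norms
  have hbound : ∀ n : ℕ, (∫ u in Ioo (0:ℝ) z, ‖F n u‖)
      ≤ (M / (B * r ^ 2) * (Real.Gamma ν * Real.Gamma (1 - ν))) * z ^ n := by
    intro n
    rw [hnormval n]
    have hnorm_const : ‖(c n : ℂ) / ((B : ℂ) * (a + n) ^ 2)‖ ≤ M / (B * r ^ 2) := by
      rw [norm_div, norm_mul, Complex.norm_real, norm_pow, Complex.norm_real,
        Real.norm_of_nonneg (hcnn n), Real.norm_of_nonneg hBpos.le]
      apply div_le_div₀ hM0 (hMle n) (by positivity)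
      have h2 : r ^ 2 ≤ ‖a + (n:ℂ)‖ ^ 2 := by
        apply pow_le_pow_left₀ hr.le (hra n)
      exact mul_le_mul_of_nonneg_left h2 hBpos.le
    have hgam : Real.Gamma (ν + n) * Real.Gamma (1 - ν) / n.factorial
        ≤ Real.Gamma ν * Real.Gamma (1 - ν) := by
      have hfle := Gamma_fact_le hν0 hν1 n
      have hg1 : (0:ℝ) < Real.Gamma (1 - ν) := Real.Gamma_pos_of_pos (by linarith)
      have hfac : (0:ℝ) < n.factorial := by positivity
      rw [div_le_iff₀ hfac]
      nlinarith
    calc ‖(c n : ℂ) / ((B : ℂ) * (a + n) ^ 2)‖ *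
          (z ^ n * (Real.Gamma (ν + n) * Real.Gamma (1 - ν) / n.factorial))
        ≤ (M / (B * r ^ 2)) * (z ^ n * (Real.Gamma ν * Real.Gamma (1 - ν))) := by
          apply mul_le_mul hnorm_const _ _ (by positivity)
          · exact mul_le_mul_of_nonneg_left hgam (by positivity)
          · have hnn : (0:ℝ) ≤ Real.Gamma (ν + n) * Real.Gamma (1 - ν) / n.factorial := by
              have := Real.Gamma_pos_of_pos (show (0:ℝ) < ν + n by positivity)
              have := Real.Gamma_pos_of_pos (show (0:ℝ) < 1 - ν by linarith)
              positivity
            positivity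
      _ = (M / (B * r ^ 2) * (Real.Gamma ν * Real.Gamma (1 - ν))) * z ^ n := by ring
  have hsum : Summable (fun n : ℕ => ∫ u in Ioo (0:ℝ) z, ‖F n u‖) := by
    apply Summable.of_nonneg_of_le
      (fun n => integral_nonneg (fun u => norm_nonneg _)) hbound
    exact (summable_geometric_of_lt_one hz0.le hz1).mul_left _
  -- Step 4 : swap sum and integral
  have hswap := integral_tsum_of_summable_integral_norm hFint hsum
  have hinteq : (∫ u in Ioo (0:ℝ) z,
      (((z - u) ^ (-ν) : ℝ) : ℂ) * (((u ^ (ν - 1) : ℝ) : ℂ) * hurwitzPhi τ ω p q u 2 a))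
      = ∑' n : ℕ, ∫ u in Ioo (0:ℝ) z, F n u := by
    rw [setIntegral_congr_fun measurableSet_Ioo (fun u hu => step1 u hu)]
    exact hswap.symm
  have hint_val : ∀ n : ℕ, (∫ u in Ioo (0:ℝ) z, F n u)
      = ((c n : ℂ) / ((B:ℂ) * (a + n) ^ 2)) *
        ((z ^ n * (Real.Gamma (ν + n) * Real.Gamma (1 - ν) / n.factorial) : ℝ) : ℂ) := by
    intro n
    rw [hF]
    dsimp only
    rw [integral_const_mul]
    congr 1
    calc (∫ u in Ioo (0:ℝ) z, (((z - u) ^ (-ν) * u ^ (ν - 1 + n) : ℝ) : ℂ))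
        = ((∫ u in Ioo (0:ℝ) z, (z - u) ^ (-ν) * u ^ (ν - 1 + n) : ℝ) : ℂ) := integral_ofReal
      _ = _ := by rw [K_value hν0 hν1 hz0 n]
  -- Final assembly
  unfold rlDeriv
  dsimp only
  rw [hinteq, ← tsum_mul_left]
  apply tsum_congr
  intro n
  rw [hint_val n]
  have gen : ∀ (C BB G1 GN zn fac : ℝ) (w : ℂ), BB ≠ 0 → G1 ≠ 0 → fac ≠ 0 → w ≠ 0 →
      (1 / (G1:ℂ)) * ((C:ℂ) / ((BB:ℂ) * w ^ 2) * ((zn * (GN * G1 / fac) : ℝ) : ℂ))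
        = ((C * GN * zn / (fac * BB) : ℝ) : ℂ) / w ^ 2 := by
    intro C BB G1 GN zn fac w hBB hG1 hfac hw
    have hBB' : (BB:ℂ) ≠ 0 := Complex.ofReal_ne_zero.mpr hBB
    have hG1' : (G1:ℂ) ≠ 0 := Complex.ofReal_ne_zero.mpr hG1
    have hfac' : (fac:ℂ) ≠ 0 := Complex.ofReal_ne_zero.mpr hfac
    have hw2 : w ^ 2 ≠ 0 := pow_ne_zero 2 hw
    push_cast
    rw [show (1:ℂ) / ↑G1 * (↑C / (↑BB * w ^ 2) * (↑zn * (↑GN * ↑G1 / ↑fac)))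
        = (↑C * ↑zn * ↑GN * (↑G1 / ↑G1) / ↑fac / ↑BB) / w ^ 2 by ring]
    rw [div_self hG1']
    rw [div_div, div_div]
    ring_nf
  have hg1 : (0:ℝ) < Real.Gamma (1 - ν) := Real.Gamma_pos_of_pos (by linarith)
  have hfacne : ((n.factorial : ℕ) : ℝ) ≠ 0 := by positivity
  exact gen (c n) B (Real.Gamma (1 - ν)) (Real.Gamma (ν + n)) (z ^ n) n.factorial
    (a + n) hBpos.ne' hg1.ne' hfacne (hane n)

lemma term_id (C Gn Gν fac B zn N rr : ℝ) (hGν : Gν ≠ 0) (hfac : fac ≠ 0) (hB : B ≠ 0)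
    (hrr : rr ≠ 0) (hN : (0:ℝ) < N) :
    ((2 * N * (Gn / Gν) * C * zn / (fac * B * (N ^ 2 + rr ^ 2) ^ 2) : ℝ) : ℂ)
      = (1 / (2 * Complex.I * (rr:ℂ) * (Gν:ℂ))) *
        (((C * Gn * zn / (fac * B) : ℝ) : ℂ) / ((-(rr:ℂ) * Complex.I + (N:ℂ)) ^ 2)
          - ((C * Gn * zn / (fac * B) : ℝ) : ℂ) / (((rr:ℂ) * Complex.I + (N:ℂ)) ^ 2)) := by
  set w1 : ℂ := -(rr:ℂ) * Complex.I + N with hw1def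
  set w2 : ℂ := (rr:ℂ) * Complex.I + N with hw2def
  have hw12 : w1 * w2 = (N:ℂ) ^ 2 + (rr:ℂ) ^ 2 := by
    rw [hw1def, hw2def]
    linear_combination (-(rr:ℂ) ^ 2) * Complex.I_sq
  have hNRr : (0:ℝ) < N ^ 2 + rr ^ 2 := by positivity
  have hNR : ((N:ℂ) ^ 2 + (rr:ℂ) ^ 2) ≠ 0 := by
    rw [show (N:ℂ) ^ 2 + (rr:ℂ) ^ 2 = ((N ^ 2 + rr ^ 2 : ℝ) : ℂ) by push_cast; ring]
    exact Complex.ofReal_ne_zero.mpr hNRr.ne'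
  have hprod : w1 * w2 ≠ 0 := by rw [hw12]; exact hNR
  have hw1 : w1 ≠ 0 := fun h => hprod (by rw [h, zero_mul])
  have hw2 : w2 ≠ 0 := fun h => hprod (by rw [h, mul_zero])
  have hdiff : w2 ^ 2 - w1 ^ 2 = 4 * (N:ℂ) * (rr:ℂ) * Complex.I := by
    rw [hw1def, hw2def]; ring
  have hbr : ((C * Gn * zn / (fac * B) : ℝ) : ℂ) / w1 ^ 2
      - ((C * Gn * zn / (fac * B) : ℝ) : ℂ) / w2 ^ 2
      = ((C * Gn * zn / (fac * B) : ℝ) : ℂ) * (4 * (N:ℂ) * (rr:ℂ) * Complex.I) /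
          (((N:ℂ) ^ 2 + (rr:ℂ) ^ 2) ^ 2) := by
    rw [div_sub_div _ _ (pow_ne_zero 2 hw1) (pow_ne_zero 2 hw2),
      show w1 ^ 2 * w2 ^ 2 = (w1 * w2) ^ 2 by ring, hw12]
    congr 1
    linear_combination ((C * Gn * zn / (fac * B) : ℝ) : ℂ) * hdiff
  rw [hbr]
  have hI := Complex.I_ne_zero
  have hGν' : (Gν:ℂ) ≠ 0 := Complex.ofReal_ne_zero.mpr hGν
  have hfac' : (fac:ℂ) ≠ 0 := Complex.ofReal_ne_zero.mpr hfac
  have hB' : (B:ℂ) ≠ 0 := Complex.ofReal_ne_zero.mpr hB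
  have hrr' : (rr:ℂ) ≠ 0 := Complex.ofReal_ne_zero.mpr hrr
  have hd : (2 * Complex.I * (rr:ℂ) * (Gν:ℂ)) ≠ 0 := by
    apply mul_ne_zero (mul_ne_zero (mul_ne_zero two_ne_zero hI) hrr') hGν'
  apply mul_left_cancel₀ hd
  rw [← mul_assoc, mul_one_div, div_self hd, one_mul]
  push_cast
  field_simp [hGν', hfac', hB', hNR]
  ring

theorem statement9 (r τ ω p q ν z : ℝ)
    (hr : 0 < r) (hτ : 0 < τ) (hω : 0 < ω) (hτω : τ < ω)
    (hp : 0 < p) (hq : 0 < q) (hν0 : 0 < ν) (hν1 : ν < 1)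
    (hz : z ∈ Ioo (0:ℝ) 1) :
    ((∑' k : ℕ, 2 * ((k : ℝ) + 1) * poch ν (k + 1) *
        betaPQ p q (τ + ((k : ℝ) + 1)) (ω - τ) * z ^ (k + 1) /
        ((Nat.factorial (k + 1) : ℝ) * betaE τ (ω - τ) *
          (((k : ℝ) + 1) ^ 2 + r ^ 2) ^ 2) : ℝ) : ℂ) =
      (1 / (2 * Complex.I * (r : ℂ) * (Real.Gamma ν : ℂ))) *
        (rlDeriv ν
            (fun u => ((u ^ (ν - 1) : ℝ) : ℂ) *
              hurwitzPhi τ ω p q u 2 (-(r : ℂ) * Complex.I)) z -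
          rlDeriv ν
            (fun u => ((u ^ (ν - 1) : ℝ) : ℂ) *
              hurwitzPhi τ ω p q u 2 ((r : ℂ) * Complex.I)) z) := by
  obtain ⟨hz0, hz1⟩ := hz
  have hBpos : 0 < betaE τ (ω - τ) := by
    unfold betaE
    have h1 := Real.Gamma_pos_of_pos hτ
    have h2 := Real.Gamma_pos_of_pos (by linarith : (0:ℝ) < ω - τ)
    have h3 := Real.Gamma_pos_of_pos (by linarith : (0:ℝ) < τ + (ω - τ))
    positivity
  set B : ℝ := betaE τ (ω - τ) with hB
  -- norm bounds for the two values of `a`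
  have hnorm : ∀ (s : ℝ), s = r ∨ s = -r → ∀ n : ℕ, r ≤ ‖(s : ℂ) * Complex.I + (n:ℂ)‖ := by
    intro s hs n
    have hsq : ‖(s : ℂ) * Complex.I + (n:ℂ)‖ ^ 2 = (n:ℝ) ^ 2 + s ^ 2 := by
      rw [Complex.sq_norm]
      simp [Complex.normSq_apply]
      ring
    have h2 : r ^ 2 ≤ ‖(s : ℂ) * Complex.I + (n:ℂ)‖ ^ 2 := by
      rw [hsq]
      rcases hs with h | h <;> subst h <;> nlinarith [sq_nonneg (n:ℝ)]
    nlinarith [norm_nonneg ((s : ℂ) * Complex.I + (n:ℂ))]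
  have ha1 : ∀ n : ℕ, r ≤ ‖(-(r:ℂ) * Complex.I) + (n:ℂ)‖ := by
    intro n
    have h := hnorm (-r) (Or.inr rfl) n
    rw [show ((-r:ℝ):ℂ) * Complex.I = -(r:ℂ) * Complex.I by push_cast; ring] at h
    exact h
  have ha2 : ∀ n : ℕ, r ≤ ‖((r:ℂ) * Complex.I) + (n:ℂ)‖ := fun n => hnorm r (Or.inl rfl) n
  have h1 := key_lemma hr hτ hτω hp hq hν0 hν1 ⟨hz0, hz1⟩ _ ha1
  have h2 := key_lemma hr hτ hτω hp hq hν0 hν1 ⟨hz0, hz1⟩ _ ha2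
  rw [h1, h2]
  set g : ℕ → ℝ := fun n => betaPQ p q (τ + n) (ω - τ) * Real.Gamma (ν + n) * z ^ n /
    (n.factorial * B) with hgdef
  obtain ⟨M, hM0, hMle⟩ := betaPQ_uniform_bound τ ω p q hτ hp hq
  have hgnn : ∀ n, 0 ≤ g n := by
    intro n
    have h1 := betaPQ_nonneg p q (τ + n) (ω - τ)
    have h2 := (Real.Gamma_pos_of_pos (show (0:ℝ) < ν + n by positivity)).le
    have h3 : (0:ℝ) < n.factorial := by positivity
    rw [hgdef]
    positivity
  have hgbound : ∀ n, g n ≤ (M * Real.Gamma ν / B) * z ^ n := by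
    intro n
    rw [hgdef]
    dsimp only
    rw [div_le_iff₀ (by positivity : (0:ℝ) < (n.factorial:ℝ) * B)]
    have hγ := Gamma_fact_le hν0 hν1 n
    have hγn := (Real.Gamma_pos_of_pos (show (0:ℝ) < ν + n by positivity)).le
    have hb := betaPQ_nonneg p q (τ + n) (ω - τ)
    have hMn := hMle n
    have hzn : (0:ℝ) ≤ z ^ n := by positivity
    have hΓν := (Real.Gamma_pos_of_pos hν0).le
    have hfc : (0:ℝ) ≤ (n.factorial:ℝ) := by positivity
    calc betaPQ p q (τ + n) (ω - τ) * Real.Gamma (ν + n) * z ^ n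
        ≤ M * (Real.Gamma ν * n.factorial) * z ^ n := by
          apply mul_le_mul_of_nonneg_right _ hzn
          exact mul_le_mul hMn hγ hγn hM0
      _ = M * Real.Gamma ν / B * z ^ n * ((n.factorial : ℝ) * B) := by
          field_simp
  have hsummable : ∀ (a : ℂ), (∀ n : ℕ, r ≤ ‖a + (n:ℂ)‖) →
      Summable (fun n : ℕ => ((g n : ℝ) : ℂ) / ((a + (n:ℂ)) ^ 2)) := by
    intro a hra
    apply Summable.of_norm_bounded (g := fun n => (M * Real.Gamma ν / B) * z ^ n / r ^ 2)
      (((summable_geometric_of_lt_one hz0.le hz1).mul_left _).div_const _)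
    intro n
    rw [norm_div, norm_pow, Complex.norm_real, Real.norm_of_nonneg (hgnn n)]
    apply div_le_div₀ ?_ (hgbound n) (by positivity) ?_
    · have := (Real.Gamma_pos_of_pos hν0).le
      positivity
    · exact pow_le_pow_left₀ hr.le (hra n) 2
  have hs1 := hsummable _ ha1
  have hs2 := hsummable _ ha2
  rw [← Summable.tsum_sub hs1 hs2, Summable.tsum_eq_zero_add (hs1.sub hs2)]
  have hzero : ((g 0 : ℝ) : ℂ) / ((-(r:ℂ) * Complex.I + ((0:ℕ):ℂ)) ^ 2)
      - ((g 0 : ℝ) : ℂ) / (((r:ℂ) * Complex.I + ((0:ℕ):ℂ)) ^ 2) = 0 := by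
    rw [show (-(r:ℂ) * Complex.I + ((0:ℕ):ℂ)) ^ 2
        = ((r:ℂ) * Complex.I + ((0:ℕ):ℂ)) ^ 2 by push_cast; ring]
    exact sub_self _
  rw [hzero, zero_add, ← tsum_mul_left, Complex.ofReal_tsum]
  apply tsum_congr
  intro k
  have hNpos : (0:ℝ) < (k:ℝ) + 1 := by positivity
  have hgνne : Real.Gamma ν ≠ 0 := (Real.Gamma_pos_of_pos hν0).ne'
  have hfacne : (((k+1).factorial : ℕ) : ℝ) ≠ 0 := by positivity
  have hti := term_id (betaPQ p q (τ + ((k:ℝ)+1)) (ω - τ)) (Real.Gamma (ν + ((k:ℝ)+1)))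
      (Real.Gamma ν) ((k+1).factorial : ℝ) B (z ^ (k+1)) ((k:ℝ)+1) r
      hgνne hfacne hBpos.ne' hr.ne' hNpos
  simp only [poch, hgdef]
  push_cast at hti ⊢
  exact hti
end

section
/- Let r, ν, μ, τ, ω > 0 with ω > τ, let p, q > 0, and let z be real with |z| ≤ 1. Then S_{μ,ν,τ,ω}^{(2,1)}(r; {k}; p,q; z) = (1/(2ir)) [ Φ_{ν,τ,ω}(z, μ, −ir; p,q) − Φ_{ν,τ,ω}(z, μ, ir; p,q) ] in the case μ = 2; explicitly, Σ_{k=1}^∞ 2k (ν)_k B_{p,q}(τ+k, ω−τ) z^k / (k! B(τ, ω−τ)(k² + r²)²) = (1/(2ir)) Σ_{n=0}^∞ ((ν)_n/n!) (B_{p,q}(τ+n, ω−τ)/B(τ, ω−τ)) z^n [ (n−ir)^{−2} − (n+ir)^{−2} ]. -/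
open Real MeasureTheory Set Filter

/-- Key pointwise identity: `(1/(2ir))·((n−ir)⁻² − (n+ir)⁻²) = 2n/(n²+r²)²`. -/
lemma key_statement10 (r : ℝ) (hr : 0 < r) (n : ℕ) :
    (1 / (2 * Complex.I * (r : ℂ))) *
      (((n : ℂ) - (r : ℂ) * Complex.I) ^ (-2 : ℂ) -
        ((n : ℂ) + (r : ℂ) * Complex.I) ^ (-2 : ℂ)) =
    ((2 * n / ((n ^ 2 + r ^ 2) ^ 2) : ℝ) : ℂ) := by
  have h1 : (n : ℂ) - (r : ℂ) * Complex.I ≠ 0 := by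
    intro h
    have := congrArg Complex.im h
    simp at this
    exact hr.ne' this
  have h2 : (n : ℂ) + (r : ℂ) * Complex.I ≠ 0 := by
    intro h
    have := congrArg Complex.im h
    simp at this
    exact hr.ne' this
  have e1 : ((n : ℂ) - (r : ℂ) * Complex.I) ^ (-2 : ℂ)
      = (((n : ℂ) - (r : ℂ) * Complex.I) ^ (2:ℕ))⁻¹ := by
    rw [show (-2 : ℂ) = -((2:ℕ):ℂ) by norm_num, Complex.cpow_neg, Complex.cpow_natCast]
  have e2 : ((n : ℂ) + (r : ℂ) * Complex.I) ^ (-2 : ℂ)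
      = (((n : ℂ) + (r : ℂ) * Complex.I) ^ (2:ℕ))⁻¹ := by
    rw [show (-2 : ℂ) = -((2:ℕ):ℂ) by norm_num, Complex.cpow_neg, Complex.cpow_natCast]
  rw [e1, e2]
  have hI : (Complex.I : ℂ) ≠ 0 := Complex.I_ne_zero
  have hrC : (r : ℂ) ≠ 0 := by exact_mod_cast hr.ne'
  have hd : ((n:ℂ)^2 + (r:ℂ)^2) ≠ 0 := by
    have : ((n:ℂ) - r * Complex.I) * ((n:ℂ) + r * Complex.I) = (n:ℂ)^2 + (r:ℂ)^2 := by
      ring_nf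
      simp [Complex.I_sq]
    rw [← this]; exact mul_ne_zero h1 h2
  push_cast
  rw [inv_sub_inv (pow_ne_zero 2 h1) (pow_ne_zero 2 h2),
    show ((n : ℂ) - (r : ℂ) * Complex.I) ^ 2 * ((n : ℂ) + (r : ℂ) * Complex.I) ^ 2
      = ((n:ℂ)^2 + (r:ℂ)^2) ^ 2 by linear_combination (-(r:ℂ)^2 * (2 * (n:ℂ)^2 + (r:ℂ)^2 - (r:ℂ)^2 * Complex.I^2)) * Complex.I_sq]
  field_simp
  ring

theorem statement10 (r ν μ τ ω p q z : ℝ)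
    (hr : 0 < r) (hν : 0 < ν) (hμ : 0 < μ) (hτ : 0 < τ) (hω : 0 < ω) (hτω : τ < ω)
    (hp : 0 < p) (hq : 0 < q) (hz : |z| ≤ 1) :
    ((∑' k : ℕ, 2 * ((k : ℝ) + 1) * poch ν (k + 1) *
        betaPQ p q (τ + ((k : ℝ) + 1)) (ω - τ) * z ^ (k + 1) /
        ((Nat.factorial (k + 1) : ℝ) * betaE τ (ω - τ) *
          (((k : ℝ) + 1) ^ 2 + r ^ 2) ^ 2) : ℝ) : ℂ) =
      (1 / (2 * Complex.I * (r : ℂ))) *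
        ∑' n : ℕ, ((poch ν n / (Nat.factorial n : ℝ) *
            (betaPQ p q (τ + (n : ℝ)) (ω - τ) / betaE τ (ω - τ)) * z ^ n : ℝ) : ℂ) *
          (((n : ℂ) - (r : ℂ) * Complex.I) ^ (-2 : ℂ) -
            ((n : ℂ) + (r : ℂ) * Complex.I) ^ (-2 : ℂ)) := by
  set a : ℕ → ℝ := fun n => poch ν n / (Nat.factorial n : ℝ) *
      (betaPQ p q (τ + (n : ℝ)) (ω - τ) / betaE τ (ω - τ)) * z ^ n *
      (2 * n / ((n ^ 2 + r ^ 2) ^ 2)) with ha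
  rw [← tsum_mul_left]
  have step1 : ∀ n : ℕ, (1 / (2 * Complex.I * (r : ℂ))) *
      (((poch ν n / (Nat.factorial n : ℝ) *
        (betaPQ p q (τ + (n : ℝ)) (ω - τ) / betaE τ (ω - τ)) * z ^ n : ℝ) : ℂ) *
      (((n : ℂ) - (r : ℂ) * Complex.I) ^ (-2 : ℂ) -
        ((n : ℂ) + (r : ℂ) * Complex.I) ^ (-2 : ℂ))) = ((a n : ℝ) : ℂ) := by
    intro n
    rw [mul_left_comm, key_statement10 r hr n, ha]
    push_cast
    ring
  rw [tsum_congr step1, ← Complex.ofReal_tsum]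
  norm_cast
  rw [← Function.Injective.tsum_eq (f := a) Nat.succ_injective (by
    intro x hx
    rcases x with _ | x
    · exact absurd (by simp [ha]) hx
    · exact ⟨x, rfl⟩)]
  apply tsum_congr
  intro k
  simp only [ha, Nat.succ_eq_add_one]
  push_cast
  simp only [div_eq_mul_inv, mul_inv]
  ring
end

section
/- Let λ, τ, ω, θ, σ, δ > 0 with ω > τ, and let p, q ≥ 0. Then for every real z the (p,q)-Mittag-Leffler function has the integral representation E_{δ,θ,σ; p,q}^{(λ, τ, ω)}(z) = (1/B(τ, ω−τ)) ∫₀¹ t^{τ−1} (1−t)^{ω−τ−1} exp(−p/t − q/(1−t)) E_{δ,θ,σ}^{(λ)}(zt) dt. -/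
open Real MeasureTheory Set Filter

/-- The `(p,q)`-Mittag-Leffler function `E_{δ,θ,σ;p,q}^{(lam,τ,ω)}(z)`. -/
noncomputable def mlPQ (δ θ σ lam τ ω p q z : ℝ) : ℝ :=
  ∑' k : ℕ, poch lam k * betaPQ p q (τ + (k : ℝ)) (ω - τ) * z ^ k /
    (Real.Gamma (θ * (k : ℝ) + σ) ^ δ * betaE τ (ω - τ) * (Nat.factorial k : ℝ))

/-- Generalized Mittag-Leffler function `E_{δ,θ,σ}^{(lam)}(w)`. -/
noncomputable def mlGen (δ θ σ lam w : ℝ) : ℝ :=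
  ∑' k : ℕ, poch lam k * w ^ k / (Real.Gamma (θ * (k : ℝ) + σ) ^ δ * (Nat.factorial k : ℝ))

lemma gamma_ratio {x θ : ℝ} (hθ : 0 < θ) (hx : 2 ≤ x) :
    Real.Gamma x * (x - 1) ^ θ ≤ Real.Gamma (x + θ) := by
  have hx1 : (1:ℝ) ≤ x - 1 := by linarith
  have hx1' : (0:ℝ) < x - 1 := by linarith
  have hmem1 : x - 1 ∈ Ioi (0:ℝ) := by simp [hx1']
  have hmem3 : x + θ ∈ Ioi (0:ℝ) := by simp; linarith
  have hs := Real.convexOn_log_Gamma.slope_mono_adjacent hmem1 hmem3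
    (by linarith : x - 1 < x) (by linarith : x < x + θ)
  have hΓx : 0 < Real.Gamma x := Real.Gamma_pos_of_pos (by linarith)
  have hΓx1 : 0 < Real.Gamma (x - 1) := Real.Gamma_pos_of_pos hx1'
  have hΓxθ : 0 < Real.Gamma (x + θ) := Real.Gamma_pos_of_pos (by positivity)
  have hfe : Real.Gamma x = (x - 1) * Real.Gamma (x - 1) := by
    have h := Real.Gamma_add_one (s := x - 1) hx1'.ne'
    rwa [sub_add_cancel] at h
  have hlog : Real.log (Real.Gamma x) - Real.log (Real.Gamma (x - 1)) = Real.log (x - 1) := by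
    rw [hfe, Real.log_mul hx1'.ne' hΓx1.ne']; ring
  simp only [Function.comp] at hs
  have h1 : x - (x - 1) = 1 := by ring
  have h2 : x + θ - x = θ := by ring
  rw [h1, h2, div_one] at hs
  rw [hlog] at hs
  have key : Real.log (Real.Gamma x) + θ * Real.log (x - 1) ≤ Real.log (Real.Gamma (x + θ)) := by
    have := (le_div_iff₀ hθ).mp hs
    nlinarith
  calc Real.Gamma x * (x - 1) ^ θ
      = Real.exp (Real.log (Real.Gamma x) + θ * Real.log (x - 1)) := by
        rw [Real.exp_add, Real.exp_log hΓx, Real.rpow_def_of_pos hx1']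
        ring_nf
    _ ≤ Real.exp (Real.log (Real.Gamma (x + θ))) := Real.exp_le_exp.mpr key
    _ = Real.Gamma (x + θ) := Real.exp_log hΓxθ

lemma poch_pos {a : ℝ} (ha : 0 < a) (n : ℕ) : 0 < poch a n :=
  div_pos (Real.Gamma_pos_of_pos (by positivity)) (Real.Gamma_pos_of_pos ha)

lemma poch_succ {a : ℝ} (ha : 0 < a) (n : ℕ) :
    poch a (n + 1) = (a + n) * poch a n := by
  unfold poch
  have h : a + ((n:ℝ) + 1) = (a + n) + 1 := by ring
  rw [Nat.cast_add, Nat.cast_one, h, Real.Gamma_add_one (by positivity)]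
  ring

lemma summable_d {lam θ σ δ : ℝ} (hlam : 0 < lam) (hθ : 0 < θ) (hσ : 0 < σ) (hδ : 0 < δ)
    (w : ℝ) :
    Summable (fun k : ℕ => poch lam k * w ^ k /
      (Real.Gamma (θ * (k : ℝ) + σ) ^ δ * (Nat.factorial k : ℝ))) := by
  set A : ℕ → ℝ := fun k => Real.Gamma (θ * (k : ℝ) + σ) ^ δ with hA
  have hApos : ∀ k : ℕ, 0 < A k := fun k =>
    Real.rpow_pos_of_pos (Real.Gamma_pos_of_pos (by positivity)) _
  set d : ℕ → ℝ := fun k => poch lam k * w ^ k / (A k * (Nat.factorial k : ℝ)) with hd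
  have hev : ∀ᶠ k : ℕ in atTop, ‖d (k + 1)‖ ≤ (1/2 : ℝ) * ‖d k‖ := by
    have h2 : ∀ᶠ k : ℕ in atTop, (2:ℝ) ≤ θ * (k:ℝ) + σ := by
      have ht : Tendsto (fun k : ℕ => θ * (k:ℝ) + σ) atTop atTop :=
        tendsto_atTop_add_const_right _ σ
          (tendsto_natCast_atTop_atTop.const_mul_atTop hθ)
      exact ht.eventually_ge_atTop 2
    have hM : ∀ᶠ k : ℕ in atTop,
        2 * (lam + 1) * |w| ≤ (θ * (k:ℝ) + σ - 1) ^ (θ * δ) := by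
      have ht : Tendsto (fun k : ℕ => (θ * (k:ℝ) + σ - 1) ^ (θ * δ)) atTop atTop := by
        refine (tendsto_rpow_atTop (by positivity)).comp ?_
        exact Tendsto.congr (fun k => by ring)
          (tendsto_atTop_add_const_right _ (σ - 1)
            (tendsto_natCast_atTop_atTop.const_mul_atTop hθ))
      exact ht.eventually_ge_atTop _
    filter_upwards [h2, hM] with k h2 hM
    set x : ℝ := θ * (k:ℝ) + σ with hx
    have hA1 : A k * (x - 1) ^ (θ * δ) ≤ A (k + 1) := by
      have hineq := gamma_ratio hθ h2
      have hx1 : (0:ℝ) < x - 1 := by linarith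
      have : (Real.Gamma x * (x - 1) ^ θ) ^ δ ≤ Real.Gamma (x + θ) ^ δ :=
        Real.rpow_le_rpow (by positivity) hineq hδ.le
      rw [Real.mul_rpow (Real.Gamma_pos_of_pos (by linarith)).le (by positivity),
        ← Real.rpow_mul hx1.le] at this
      have hcast : θ * ((k:ℝ) + 1) + σ = x + θ := by rw [hx]; ring
      simp only [hA, Nat.cast_add, Nat.cast_one, hcast]
      exact this
    have habs : ∀ m : ℕ, ‖d m‖ = poch lam m * |w| ^ m / (A m * (Nat.factorial m : ℝ)) := by
      intro m
      rw [Real.norm_eq_abs, hd]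
      rw [abs_div, abs_mul, abs_pow, abs_mul,
        abs_of_pos (poch_pos hlam m), abs_of_pos (hApos m), Nat.abs_cast]
    have key : (lam + (k:ℝ)) * |w| * A k ≤ (1/2) * (((k:ℝ) + 1) * A (k + 1)) := by
      have h1 : (lam + (k:ℝ)) * |w| ≤ ((k:ℝ) + 1) * ((lam + 1) * |w|) := by
        have hk0 : (0:ℝ) ≤ (k:ℝ) := Nat.cast_nonneg k
        have h0 : lam + (k:ℝ) ≤ ((k:ℝ) + 1) * (lam + 1) := by nlinarith
        nlinarith [mul_le_mul_of_nonneg_right h0 (abs_nonneg w)]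
      have h2' : (lam + 1) * |w| ≤ (1/2) * (x - 1) ^ (θ * δ) := by linarith
      calc (lam + (k:ℝ)) * |w| * A k
          ≤ (((k:ℝ) + 1) * ((lam + 1) * |w|)) * A k :=
            mul_le_mul_of_nonneg_right h1 (hApos k).le
        _ ≤ (((k:ℝ) + 1) * ((1/2) * (x - 1) ^ (θ * δ))) * A k := by
            have h3 := mul_le_mul_of_nonneg_left h2'
              (by positivity : (0:ℝ) ≤ (k:ℝ) + 1)
            exact mul_le_mul_of_nonneg_right h3 (hApos k).le
        _ = (1/2) * (((k:ℝ) + 1) * (A k * (x - 1) ^ (θ * δ))) := by ring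
        _ ≤ (1/2) * (((k:ℝ) + 1) * A (k + 1)) := by
            have h4 := mul_le_mul_of_nonneg_left hA1 (by positivity : (0:ℝ) ≤ (k:ℝ) + 1)
            linarith
    have hd1 : ‖d (k + 1)‖ = ((lam + (k:ℝ)) * |w| * A k / (((k:ℝ) + 1) * A (k + 1))) * ‖d k‖ := by
      rw [habs, habs, poch_succ hlam, Nat.factorial_succ, pow_succ]
      have hfac : ((Nat.factorial k : ℝ)) ≠ 0 := by positivity
      have hk1 : ((k:ℝ) + 1) ≠ 0 := by positivity
      push_cast
      field_simp
      ring_nf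
      rw [mul_inv_cancel_right₀ (hApos k).ne']
    rw [hd1]
    refine mul_le_mul_of_nonneg_right ?_ (norm_nonneg _)
    rw [div_le_iff₀ (by positivity)]
    linarith
  exact summable_of_ratio_norm_eventually_le (by norm_num) hev

lemma betaIntegrable {a b : ℝ} (ha : 0 < a) (hb : 0 < b) :
    IntegrableOn (fun t : ℝ => t ^ (a - 1) * (1 - t) ^ (b - 1)) (Ioo (0:ℝ) 1) := by
  have hcont : ∀ s : Set ℝ, s ⊆ Ioo (0:ℝ) 1 →
      ContinuousOn (fun t : ℝ => t ^ (a - 1) * (1 - t) ^ (b - 1)) s := by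
    intro s hsub t ht
    obtain ⟨ht0, ht1⟩ := hsub ht
    exact (((Real.continuousAt_rpow_const t (a-1) (Or.inl (ne_of_gt ht0))).mul
      ((Real.continuousAt_rpow_const (1-t) (b-1)
        (Or.inl (by linarith))).comp (by fun_prop)))).continuousWithinAt
  have hA : IntegrableOn (fun t : ℝ => t ^ (a - 1) * (1 - t) ^ (b - 1)) (Ioo (0:ℝ) (1/2)) := by
    have hmaj : IntegrableOn (fun t : ℝ => ((1/2:ℝ) ^ (b-1) + 1) * t ^ (a - 1)) (Ioo (0:ℝ) (1/2)) := by
      exact ((intervalIntegral.integrableOn_Ioo_rpow_iff (by norm_num)).mpr (by linarith)).const_mul _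
    refine hmaj.mono' ((hcont _ (Ioo_subset_Ioo le_rfl (by norm_num))).aestronglyMeasurable
      measurableSet_Ioo) ?_
    refine (ae_restrict_iff' measurableSet_Ioo).mpr (.of_forall fun t ht => ?_)
    obtain ⟨ht0, ht1⟩ := ht
    have h1t : (1/2:ℝ) ≤ 1 - t := by linarith
    have hbd : (1 - t) ^ (b - 1) ≤ (1/2:ℝ) ^ (b-1) + 1 := by
      rcases le_or_gt b 1 with hb1 | hb1
      · have := Real.rpow_le_rpow_of_nonpos (x := 1/2) (y := 1-t) (z := b-1)
          (by norm_num) h1t (by linarith)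
        linarith [Real.rpow_nonneg (by norm_num : (0:ℝ) ≤ 1/2) (b-1)]
      · have := Real.rpow_le_one (x := 1-t) (by linarith) (by linarith) (by linarith : 0 ≤ b - 1)
        have h2 : (0:ℝ) ≤ (1/2:ℝ) ^ (b-1) := Real.rpow_nonneg (by norm_num) _
        linarith
    have hta : (0:ℝ) ≤ t ^ (a-1) := Real.rpow_nonneg ht0.le _
    rw [Real.norm_eq_abs, abs_mul, abs_of_nonneg hta,
      abs_of_nonneg (Real.rpow_nonneg (by linarith) _)]
    calc t ^ (a-1) * (1-t) ^ (b-1) ≤ t ^ (a-1) * ((1/2:ℝ) ^ (b-1) + 1) :=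
          mul_le_mul_of_nonneg_left hbd hta
      _ = ((1/2:ℝ) ^ (b-1) + 1) * t ^ (a-1) := by ring
  have hBint : IntegrableOn (fun t : ℝ => (1 - t) ^ (b - 1)) (Ioc (1/2:ℝ) 1) := by
    have h0 : IntervalIntegrable (fun x : ℝ => x ^ (b-1)) volume 0 (1/2) :=
      intervalIntegral.intervalIntegrable_rpow' (by linarith)
    have h1 := (h0.comp_sub_left 1).symm
    norm_num at h1
    exact (intervalIntegrable_iff_integrableOn_Ioc_of_le (by norm_num)).mp h1
  have hB : IntegrableOn (fun t : ℝ => t ^ (a - 1) * (1 - t) ^ (b - 1)) (Ico (1/2:ℝ) 1) := by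
    rw [integrableOn_Ico_iff_integrableOn_Ioo]
    have hmaj : IntegrableOn (fun t : ℝ => ((1/2:ℝ) ^ (a-1) + 1) * (1-t) ^ (b - 1)) (Ioo (1/2:ℝ) 1) :=
      (hBint.mono_set Ioo_subset_Ioc_self).const_mul _
    refine hmaj.mono' ((hcont _ (Ioo_subset_Ioo (by norm_num) le_rfl)).aestronglyMeasurable
      measurableSet_Ioo) ?_
    refine (ae_restrict_iff' measurableSet_Ioo).mpr (.of_forall fun t ht => ?_)
    obtain ⟨ht0, ht1⟩ := ht
    have hbd : t ^ (a - 1) ≤ (1/2:ℝ) ^ (a-1) + 1 := by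
      rcases le_or_gt a 1 with ha1 | ha1
      · have := Real.rpow_le_rpow_of_nonpos (x := 1/2) (y := t) (z := a-1)
          (by norm_num) ht0.le (by linarith)
        linarith [Real.rpow_nonneg (by norm_num : (0:ℝ) ≤ 1/2) (a-1)]
      · have := Real.rpow_le_one (x := t) (by linarith) (by linarith) (by linarith : 0 ≤ a - 1)
        have h2 : (0:ℝ) ≤ (1/2:ℝ) ^ (a-1) := Real.rpow_nonneg (by norm_num) _
        linarith
    have htb : (0:ℝ) ≤ (1-t) ^ (b-1) := Real.rpow_nonneg (by linarith) _
    rw [Real.norm_eq_abs, abs_mul, abs_of_nonneg (Real.rpow_nonneg (by linarith) _),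
      abs_of_nonneg htb]
    calc t ^ (a-1) * (1-t) ^ (b-1) ≤ ((1/2:ℝ) ^ (a-1) + 1) * (1-t) ^ (b-1) :=
          mul_le_mul_of_nonneg_right hbd htb
      _ = _ := by ring
  refine (hA.union hB).mono_set fun t ht => ?_
  rcases le_or_gt (1/2:ℝ) t with h | h
  · exact Or.inr ⟨h, ht.2⟩
  · exact Or.inl ⟨ht.1, h⟩

theorem statement16 (lam τ ω θ σ δ p q : ℝ)
    (hlam : 0 < lam) (hτ : 0 < τ) (hω : 0 < ω) (hθ : 0 < θ) (hσ : 0 < σ) (hδ : 0 < δ)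
    (hτω : τ < ω) (hp : 0 ≤ p) (hq : 0 ≤ q) (z : ℝ) :
    mlPQ δ θ σ lam τ ω p q z =
      (1 / betaE τ (ω - τ)) *
        ∫ t in Ioo (0:ℝ) 1, t ^ (τ - 1) * (1 - t) ^ (ω - τ - 1) *
          Real.exp (-p / t - q / (1 - t)) * mlGen δ θ σ lam (z * t) := by
  have hωτ : (0:ℝ) < ω - τ := by linarith
  set A : ℕ → ℝ := fun k => Real.Gamma (θ * (k:ℝ) + σ) ^ δ with hA
  have hApos : ∀ k : ℕ, 0 < A k := fun k =>
    Real.rpow_pos_of_pos (Real.Gamma_pos_of_pos (by positivity)) _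
  set c : ℕ → ℝ := fun k => poch lam k * z ^ k / (A k * (Nat.factorial k : ℝ)) with hc
  set g : ℝ → ℝ := fun t => t ^ (τ - 1) * (1 - t) ^ (ω - τ - 1) *
    Real.exp (-p / t - q / (1 - t)) with hg
  set f : ℕ → ℝ → ℝ := fun k t => c k * (g t * t ^ k) with hf
  have hβ : IntegrableOn (fun t : ℝ => t ^ (τ-1) * (1-t) ^ (ω-τ-1)) (Ioo (0:ℝ) 1) :=
    betaIntegrable hτ hωτ
  -- pointwise bound
  have hbound : ∀ (k : ℕ) (t : ℝ), t ∈ Ioo (0:ℝ) 1 →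
      ‖f k t‖ ≤ |c k| * (t ^ (τ-1) * (1-t) ^ (ω-τ-1)) := by
    intro k t ht
    obtain ⟨ht0, ht1⟩ := ht
    have hβnn : (0:ℝ) ≤ t ^ (τ-1) * (1-t) ^ (ω-τ-1) :=
      mul_nonneg (Real.rpow_nonneg ht0.le _) (Real.rpow_nonneg (by linarith) _)
    have hE1 : Real.exp (-p/t - q/(1-t)) ≤ 1 := by
      rw [Real.exp_le_one_iff]
      have h1 : (0:ℝ) ≤ p / t := div_nonneg hp ht0.le
      have h2 : (0:ℝ) ≤ q / (1-t) := div_nonneg hq (by linarith)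
      have : -p/t = -(p/t) := by ring
      rw [this]; linarith
    have hE0 : (0:ℝ) ≤ Real.exp (-p/t - q/(1-t)) := (Real.exp_pos _).le
    have htk1 : t ^ k ≤ 1 := pow_le_one₀ ht0.le ht1.le
    have htk0 : (0:ℝ) ≤ t ^ k := pow_nonneg ht0.le k
    rw [hf, Real.norm_eq_abs, abs_mul]
    have habs2 : |g t * t ^ k| = g t * t ^ k := by
      refine abs_of_nonneg ?_
      exact mul_nonneg (mul_nonneg hβnn hE0) htk0
    rw [habs2]
    refine mul_le_mul_of_nonneg_left ?_ (abs_nonneg _)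
    have : g t * t ^ k = (t ^ (τ-1) * (1-t) ^ (ω-τ-1)) * (Real.exp (-p/t - q/(1-t)) * t ^ k) := by
      rw [hg]; ring
    rw [this]
    refine mul_le_of_le_one_right hβnn ?_
    exact mul_le_one₀ hE1 htk0 htk1
  -- continuity of g on Ioo
  have hgcont : ContinuousOn g (Ioo (0:ℝ) 1) := by
    intro t ht
    obtain ⟨ht0, ht1⟩ := ht
    have h1t : (1:ℝ) - t ≠ 0 := by intro h; nlinarith
    refine ContinuousAt.continuousWithinAt ?_
    refine ContinuousAt.mul (ContinuousAt.mul ?_ ?_) ?_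
    · exact Real.continuousAt_rpow_const t _ (Or.inl (ne_of_gt ht0))
    · exact (Real.continuousAt_rpow_const (1-t) _ (Or.inl h1t)).comp (by fun_prop)
    · refine Real.continuous_exp.continuousAt.comp ?_
      refine ContinuousAt.sub ?_ ?_
      · exact ContinuousAt.div continuousAt_const continuousAt_id (ne_of_gt ht0)
      · exact ContinuousAt.div continuousAt_const (by fun_prop) h1t
  have hmeas : ∀ k : ℕ, AEStronglyMeasurable (f k) (volume.restrict (Ioo (0:ℝ) 1)) := by
    intro k
    exact (continuousOn_const.mul (hgcont.mul (continuous_pow k).continuousOn)).aestronglyMeasurable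
      measurableSet_Ioo
  have hint : ∀ k : ℕ, Integrable (f k) (volume.restrict (Ioo (0:ℝ) 1)) := by
    intro k
    refine Integrable.mono (hβ.const_mul |c k|) (hmeas k) ?_
    refine (ae_restrict_iff' measurableSet_Ioo).mpr (.of_forall fun t ht => ?_)
    refine (hbound k t ht).trans (le_of_eq ?_)
    obtain ⟨ht0, ht1⟩ := ht
    rw [Real.norm_eq_abs, abs_mul, abs_abs, abs_of_nonneg
      (mul_nonneg (Real.rpow_nonneg ht0.le _) (Real.rpow_nonneg (by linarith) _))]
  -- |c k| = d k
  have habsc : ∀ k : ℕ, |c k| = poch lam k * |z| ^ k / (A k * (Nat.factorial k : ℝ)) := by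
    intro k
    rw [hc]
    rw [abs_div, abs_mul, abs_pow, abs_mul,
      abs_of_pos (poch_pos hlam k), abs_of_pos (hApos k), Nat.abs_cast]
  have hsum : Summable (fun k : ℕ => ∫ t in Ioo (0:ℝ) 1, ‖f k t‖) := by
    set I : ℝ := ∫ t in Ioo (0:ℝ) 1, t ^ (τ-1) * (1-t) ^ (ω-τ-1) with hI
    refine Summable.of_nonneg_of_le
      (fun k => integral_nonneg fun t => norm_nonneg _) (fun k => ?_)
      ((summable_d hlam hθ hσ hδ |z|).mul_right I)
    have hle : ∫ t in Ioo (0:ℝ) 1, ‖f k t‖ ≤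
        ∫ t in Ioo (0:ℝ) 1, |c k| * (t ^ (τ-1) * (1-t) ^ (ω-τ-1)) := by
      refine integral_mono_of_nonneg (.of_forall fun t => norm_nonneg _)
        (hβ.const_mul |c k|) ?_
      refine (ae_restrict_iff' measurableSet_Ioo).mpr (.of_forall fun t ht => hbound k t ht)
    rw [MeasureTheory.integral_const_mul] at hle
    rw [habsc] at hle
    exact hle
  -- swap sum and integral
  have hswap := MeasureTheory.integral_tsum_of_summable_integral_norm hint hsum
  -- evaluate each integral
  have hInt1 : ∀ k : ℕ, ∫ t in Ioo (0:ℝ) 1, f k t = c k * betaPQ p q (τ + (k:ℝ)) (ω - τ) := by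
    intro k
    rw [hf]
    simp only []
    rw [MeasureTheory.integral_const_mul]
    congr 1
    rw [betaPQ]
    refine setIntegral_congr_fun measurableSet_Ioo fun t ht => ?_
    obtain ⟨ht0, ht1⟩ := ht
    have hpow : t ^ (τ + (k:ℝ) - 1) = t ^ (τ - 1) * t ^ k := by
      rw [show τ + (k:ℝ) - 1 = (τ - 1) + (k:ℝ) by ring, Real.rpow_add ht0,
        Real.rpow_natCast]
    rw [hg]
    simp only []
    rw [hpow]
    ring
  -- identify the integrand of the RHS with the series
  have hRHS : ∀ t ∈ Ioo (0:ℝ) 1, g t * mlGen δ θ σ lam (z*t) = ∑' k : ℕ, f k t := by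
    intro t ht
    rw [mlGen, ← tsum_mul_left]
    refine tsum_congr fun k => ?_
    rw [hf, hc]
    simp only []
    rw [mul_pow]
    ring
  have key : (∫ t in Ioo (0:ℝ) 1, g t * mlGen δ θ σ lam (z*t)) =
      ∑' k : ℕ, c k * betaPQ p q (τ + (k:ℝ)) (ω - τ) := by
    calc (∫ t in Ioo (0:ℝ) 1, g t * mlGen δ θ σ lam (z*t))
        = ∫ t in Ioo (0:ℝ) 1, ∑' k : ℕ, f k t :=
          setIntegral_congr_fun measurableSet_Ioo fun t ht => hRHS t ht
      _ = ∑' k : ℕ, ∫ t in Ioo (0:ℝ) 1, f k t := hswap.symm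
      _ = ∑' k : ℕ, c k * betaPQ p q (τ + (k:ℝ)) (ω - τ) := tsum_congr hInt1
  -- final assembly
  have hB : (0:ℝ) < betaE τ (ω - τ) := by
    rw [betaE]
    have h1 : (0:ℝ) < Real.Gamma τ := Real.Gamma_pos_of_pos hτ
    have h2 : (0:ℝ) < Real.Gamma (ω - τ) := Real.Gamma_pos_of_pos hωτ
    have h3 : (0:ℝ) < Real.Gamma (τ + (ω - τ)) := Real.Gamma_pos_of_pos (by linarith)
    positivity
  rw [mlPQ]
  have hterm : ∀ k : ℕ, poch lam k * betaPQ p q (τ + (k:ℝ)) (ω - τ) * z ^ k /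
      (Real.Gamma (θ * (k:ℝ) + σ) ^ δ * betaE τ (ω - τ) * (Nat.factorial k : ℝ)) =
      (1 / betaE τ (ω - τ)) * (c k * betaPQ p q (τ + (k:ℝ)) (ω - τ)) := by
    intro k
    rw [hc]
    simp only []
    have h1 : A k ≠ 0 := (hApos k).ne'
    have h2 : betaE τ (ω - τ) ≠ 0 := hB.ne'
    have h3 : ((Nat.factorial k : ℝ)) ≠ 0 := by positivity
    rw [hA] at h1 ⊢
    field_simp
  rw [tsum_congr hterm, tsum_mul_left, key.symm]
end
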